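/- Let n ≥ 1 and let X ⊆ Y_1 × ⋯ × Y_{n+1} be a Sternfeld-type embedding of a compact metrizable space X with respect to a decomposition X = A_1 ∪ ⋯ ∪ A_{n+1} into zero-dimensional subsets, with induced transformation L. Then for every continuous f : X → ℝ and every real c with ‖f‖ < c, there exists a continuous g : Z → ℝ such that ‖g‖ ≤ ‖f‖/(n+1) (in particular ‖g‖ < c/(n+1)) and ‖f − L(g)‖ < (n/(n+1))·c, where ‖·‖ denotes the sup-norm. -/

import Mathlib

open Topology

/-- The topology of pointwise convergence on `C(T, ℝ)`: the topology induced from the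
product topology on `ℝ^T` via the canonical injection. -/
def cpTop (T : Type*) [TopologicalSpace T] : TopologicalSpace C(T, ℝ) :=
  TopologicalSpace.induced (fun f => (f : T → ℝ)) Pi.topologicalSpace

/-- A subset `A` of a topological space is zero-dimensional if the subspace `A` has a
topological base consisting of sets clopen in `A`. -/
def ZeroDimSubset {X : Type*} [TopologicalSpace X] (A : Set X) : Prop :=
  ∀ (a : A) (U : Set A), IsOpen U → a ∈ U → ∃ V : Set A, IsClopen V ∧ a ∈ V ∧ V ⊆ U

/-- The transformation induced by an embedding `X ⊆ Y₁ × ⋯ × Y_k`: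
`L g x = g y₁ + ⋯ + g y_k`, where `(y₁, …, y_k)` are the coordinates of `x`, each `yᵢ`
regarded as a point of the disjoint union `Z = Σ i, Y i`. -/
noncomputable def inducedL {ι : Type*} [Fintype ι] {Y : ι → Type*}
    [∀ i, TopologicalSpace (Y i)] (X : Set (Π i, Y i))
    (g : C((Σ i, Y i), ℝ)) : C(X, ℝ) where
  toFun x := ∑ i, g ⟨i, (x : Π i, Y i) i⟩
  continuous_toFun := by
    apply continuous_finset_sum
    intro i _
    exact g.continuous.comp (continuous_sigmaMk.comp
      ((continuous_apply i).comp continuous_subtype_val))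

set_option maxHeartbeats 1000000 in
/-- The approximation step for Sternfeld-type embeddings: for every continuous `f : X → ℝ`
and every `c` with `‖f‖ < c` there is a continuous `g : Z → ℝ` with `‖g‖ ≤ ‖f‖/(n+1)` and
`‖f - L g‖ < (n/(n+1))·c`, where `‖·‖` is the sup-norm. -/
theorem statement4 {n : ℕ} (hn : 1 ≤ n) {Y : Fin (n + 1) → Type*}
    [∀ i, TopologicalSpace (Y i)] [∀ i, CompactSpace (Y i)]
    [∀ i, TopologicalSpace.MetrizableSpace (Y i)]
    (X : Set (Π i, Y i)) [CompactSpace X]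
    (A : Fin (n + 1) → Set X) (hA : ∀ i, ZeroDimSubset (A i))
    (hcover : ⋃ i, A i = Set.univ)
    (hfiber : ∀ i, ∀ x ∈ A i, ∀ x' : X, (x' : Π j, Y j) i = (x : Π j, Y j) i → x' = x) :
    ∀ (f : C(X, ℝ)) (c : ℝ), ‖f‖ < c →
      ∃ g : C((Σ i, Y i), ℝ),
        ‖g‖ ≤ ‖f‖ / (n + 1) ∧ ‖f - inducedL X g‖ < ((n : ℝ) / (n + 1)) * c := by
  intro f c hfc
  have hc : 0 < c := lt_of_le_of_lt (norm_nonneg f) hfc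
  have hn1 : (0 : ℝ) < (n : ℝ) + 1 := by positivity
  have hn' : (1 : ℝ) ≤ (n : ℝ) := by exact_mod_cast hn
  set β : ℝ := (n : ℝ) / ((n : ℝ) + 1) * c with hβdef
  have hβpos : 0 < β := mul_pos (div_pos (by linarith) hn1) hc
  have h2β : c ≤ 2 * β := by
    have h : 2 * β = 2 * (n : ℝ) * c / ((n : ℝ) + 1) := by rw [hβdef]; ring
    rw [h, le_div_iff₀ hn1]
    nlinarith
  by_cases hM0 : ‖f‖ = 0
  · refine ⟨0, by simp [hM0], ?_⟩
    have hL : inducedL X (0 : C((Σ i, Y i), ℝ)) = 0 := by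
      ext x; simp [inducedL]
    rw [hL, sub_zero, hM0]
    exact hβpos
  · set M : ℝ := ‖f‖ with hMdef
    have hM : 0 < M := lt_of_le_of_ne (norm_nonneg f) (Ne.symm hM0)
    set η : ℝ := (c - M) / 2 with hηdef
    have hη : 0 < η := by rw [hηdef]; linarith
    set b : ℝ := β - η with hbdef
    have hbβ : b < β := by rw [hbdef]; linarith
    have hbpos : 0 < b := by rw [hbdef, hηdef]; linarith
    set m : ℝ := max (M - β) 0 with hmdef
    have hm0 : 0 ≤ m := le_max_right _ _
    have hmb : m < b := by
      rw [hmdef]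
      apply max_lt _ hbpos
      rw [hbdef, hηdef]; linarith
    set lam : ℝ := (b + m) / 2 with hlamdef
    have hlam_pos : 0 < lam := by rw [hlamdef]; linarith
    have hlam_b : lam < b := by rw [hlamdef]; linarith
    have hlamM : M - β < lam := by
      have : M - β ≤ m := le_max_left _ _
      rw [hlamdef]; linarith
    -- projections
    set p : ∀ i, X → Y i := fun i x => (x : Π j, Y j) i with hpdef
    have hp : ∀ i, Continuous (p i) := fun i =>
      (continuous_apply i).comp continuous_subtype_val
    -- open sets where f is large / small
    set Opos : Set X := {x | lam < f x} with hOposdef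
    set Oneg : Set X := {x | f x < -lam} with hOnegdef
    have hOpos : IsOpen Opos := isOpen_lt continuous_const f.continuous
    have hOneg : IsOpen Oneg := isOpen_lt f.continuous continuous_const
    -- the canonical open tubes
    set Wp : ∀ i, Set (Y i) := fun i => (p i '' Oposᶜ)ᶜ with hWpdef
    set Wn : ∀ i, Set (Y i) := fun i => (p i '' Onegᶜ)ᶜ with hWndef
    have hWp_open : ∀ i, IsOpen (Wp i) := fun i =>
      (((hOpos.isClosed_compl).isCompact.image (hp i)).isClosed).isOpen_compl
    have hWn_open : ∀ i, IsOpen (Wn i) := fun i =>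
      (((hOneg.isClosed_compl).isCompact.image (hp i)).isClosed).isOpen_compl
    have hWp_pre : ∀ i (x : X), p i x ∈ Wp i → x ∈ Opos := by
      intro i x h
      by_contra hx
      exact h ⟨x, hx, rfl⟩
    have hWn_pre : ∀ i (x : X), p i x ∈ Wn i → x ∈ Oneg := by
      intro i x h
      by_contra hx
      exact h ⟨x, hx, rfl⟩
    -- the big-value sets
    set P : Set X := {x | b ≤ f x} with hPdef
    set N : Set X := {x | f x ≤ -b} with hNdef
    have hPclosed : IsClosed P := isClosed_le continuous_const f.continuous
    have hNclosed : IsClosed N := isClosed_le f.continuous continuous_const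
    have hmemA : ∀ x : X, ∃ i, x ∈ A i := by
      intro x
      have : x ∈ ⋃ i, A i := by rw [hcover]; trivial
      exact Set.mem_iUnion.mp this
    have hPcover : P ⊆ ⋃ i, (p i) ⁻¹' (Wp i) := by
      intro x hx
      obtain ⟨i, hxi⟩ := hmemA x
      refine Set.mem_iUnion.mpr ⟨i, ?_⟩
      intro h
      obtain ⟨x', hx', he⟩ := h
      have hxx : x' = x := hfiber i x hxi x' he
      subst hxx
      exact hx' (lt_of_lt_of_le hlam_b hx)
    have hNcover : N ⊆ ⋃ i, (p i) ⁻¹' (Wn i) := by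
      intro x hx
      obtain ⟨i, hxi⟩ := hmemA x
      refine Set.mem_iUnion.mpr ⟨i, ?_⟩
      intro h
      obtain ⟨x', hx', he⟩ := h
      have hxx : x' = x := hfiber i x hxi x' he
      refine hx' ?_
      show f x' < -lam
      rw [hxx]
      have hfb : f x ≤ -b := hx
      linarith
    -- shrink the covers to closed sets
    obtain ⟨vp, hvpP, hvpcl, hvpsub⟩ :=
      exists_subset_iUnion_closed_subset hPclosed
        (fun i => (hWp_open i).preimage (hp i)) (fun x _ => Set.toFinite _) hPcover
    obtain ⟨vn, hvnN, hvncl, hvnsub⟩ :=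
      exists_subset_iUnion_closed_subset hNclosed
        (fun i => (hWn_open i).preimage (hp i)) (fun x _ => Set.toFinite _) hNcover
    set Kp : ∀ i, Set (Y i) := fun i => p i '' vp i with hKpdef
    set Kn : ∀ i, Set (Y i) := fun i => p i '' vn i with hKndef
    have hKp_cl : ∀ i, IsClosed (Kp i) := fun i =>
      (((hvpcl i).isCompact).image (hp i)).isClosed
    have hKn_cl : ∀ i, IsClosed (Kn i) := fun i =>
      (((hvncl i).isCompact).image (hp i)).isClosed
    have hKpW : ∀ i, Kp i ⊆ Wp i := fun i =>
      (Set.image_mono (hvpsub i)).trans (Set.image_preimage_subset _ _)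
    have hKnW : ∀ i, Kn i ⊆ Wn i := fun i =>
      (Set.image_mono (hvnsub i)).trans (Set.image_preimage_subset _ _)
    -- Urysohn functions
    have hφex : ∀ i, ∃ φ : C(Y i, ℝ), Set.EqOn (⇑φ) 0 (Wp i)ᶜ ∧ Set.EqOn (⇑φ) 1 (Kp i) ∧
        ∀ y, φ y ∈ Set.Icc (0:ℝ) 1 := fun i =>
      exists_continuous_zero_one_of_isClosed (hWp_open i).isClosed_compl (hKp_cl i)
        (Set.disjoint_left.mpr fun y hy hyK => hy (hKpW i hyK))
    have hψex : ∀ i, ∃ ψ : C(Y i, ℝ), Set.EqOn (⇑ψ) 0 (Wn i)ᶜ ∧ Set.EqOn (⇑ψ) 1 (Kn i) ∧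
        ∀ y, ψ y ∈ Set.Icc (0:ℝ) 1 := fun i =>
      exists_continuous_zero_one_of_isClosed (hWn_open i).isClosed_compl (hKn_cl i)
        (Set.disjoint_left.mpr fun y hy hyK => hy (hKnW i hyK))
    choose φ hφ0 hφ1 hφ01 using hφex
    choose ψ hψ0 hψ1 hψ01 using hψex
    set d : ℝ := M / ((n : ℝ) + 1) with hddef
    have hd : 0 < d := div_pos hM hn1
    refine ⟨⟨fun z => d * (φ z.1 z.2 - ψ z.1 z.2), ?_⟩, ?_, ?_⟩
    · apply continuous_sigma
      intro i
      exact continuous_const.mul ((φ i).continuous.sub (ψ i).continuous)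
    · rw [ContinuousMap.norm_le _ (le_of_lt hd)]
      rintro ⟨i, y⟩
      show |d * (φ i y - ψ i y)| ≤ d
      rw [abs_mul, abs_of_pos hd]
      have h1 := hφ01 i y
      have h2 := hψ01 i y
      calc d * |φ i y - ψ i y| ≤ d * 1 := by
            apply mul_le_mul_of_nonneg_left _ hd.le
            rw [abs_le]
            constructor <;> [linarith [h1.1, h2.2]; linarith [h1.2, h2.1]]
        _ = d := mul_one d
    · rw [ContinuousMap.norm_lt_iff _ hβpos]
      intro x
      rw [ContinuousMap.sub_apply]
      have hLg : (inducedL X ⟨fun z => d * (φ z.1 z.2 - ψ z.1 z.2), by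
            apply continuous_sigma
            intro i
            exact continuous_const.mul ((φ i).continuous.sub (ψ i).continuous)⟩) x
          = ∑ i, d * (φ i (p i x) - ψ i (p i x)) := rfl
      rw [hLg]
      set S : ℝ := ∑ i, d * (φ i (p i x) - ψ i (p i x)) with hSdef
      have hfx : |f x| ≤ M := f.norm_coe_le_norm x
      have hfxM : f x ≤ M := le_of_abs_le hfx
      have hfxM' : -M ≤ f x := neg_le_of_abs_le hfx
      -- basic facts about the bump functions at x
      have hφpos : ∀ i, φ i (p i x) ≠ 0 → lam < f x := by
        intro i h
        have hmem : p i x ∈ Wp i := by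
          by_contra hmem
          exact h (hφ0 i hmem)
        exact hWp_pre i x hmem
      have hψpos : ∀ i, ψ i (p i x) ≠ 0 → f x < -lam := by
        intro i h
        have hmem : p i x ∈ Wn i := by
          by_contra hmem
          exact h (hψ0 i hmem)
        exact hWn_pre i x hmem
      have hcard : ∑ _i : Fin (n+1), d = M := by
        rw [Finset.sum_const, Finset.card_univ, Fintype.card_fin, nsmul_eq_mul, hddef]
        push_cast
        field_simp
      have hMd : M - d < β := by
        have h1 : M - d = (n : ℝ) * M / ((n : ℝ) + 1) := by
          rw [hddef]; field_simp; ring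
        have h2 : β = (n : ℝ) * c / ((n : ℝ) + 1) := by rw [hβdef]; ring
        rw [h1, h2, div_lt_div_iff_of_pos_right hn1]
        nlinarith [mul_pos (mul_pos (lt_of_lt_of_le zero_lt_one hn') hn1) (sub_pos.mpr hfc)]
      rw [Real.norm_eq_abs, abs_lt]
      rcases le_or_gt (f x) lam with h1 | h1
      · rcases le_or_gt (-lam) (f x) with h2 | h2
        · -- middle: S = 0
          have hS0 : S = 0 := by
            rw [hSdef]
            apply Finset.sum_eq_zero
            intro i _
            have hφz : φ i (p i x) = 0 := by
              by_contra h; exact absurd (hφpos i h) (not_lt.mpr h1)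
            have hψz : ψ i (p i x) = 0 := by
              by_contra h; exact absurd (hψpos i h) (not_lt.mpr (by linarith))
            rw [hφz, hψz]; ring
          rw [hS0]
          constructor <;> [linarith; linarith]
        · -- negative case: f x < -lam
          have hφz : ∀ i, φ i (p i x) = 0 := by
            intro i
            by_contra h
            exact absurd (hφpos i h) (not_lt.mpr (by linarith))
          have hterm : ∀ i, d * (φ i (p i x) - ψ i (p i x)) = -(d * ψ i (p i x)) := by
            intro i; rw [hφz i]; ring
          have hSle : S ≤ 0 := by
            rw [hSdef]
            apply Finset.sum_nonpos
            intro i _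
            rw [hterm i]
            simp only [neg_nonpos]
            exact mul_nonneg hd.le (hψ01 i _).1
          have hSge : -M ≤ S := by
            rw [hSdef, ← hcard, ← Finset.sum_neg_distrib]
            apply Finset.sum_le_sum
            intro i _
            rw [hterm i, neg_le_neg_iff]
            calc d * ψ i (p i x) ≤ d * 1 :=
                  mul_le_mul_of_nonneg_left (hψ01 i _).2 hd.le
              _ = d := mul_one d
          constructor
          · -- -β < f x - S
            rcases lt_or_ge (-β) (f x) with h3 | h3
            · linarith
            · -- f x ≤ -β, so x ∈ N
              have hxN : x ∈ N := by
                show f x ≤ -b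
                linarith
              obtain ⟨i0, hi0⟩ := Set.mem_iUnion.mp (hvnN hxN)
              have hψ1' : ψ i0 (p i0 x) = 1 := hψ1 i0 ⟨x, hi0, rfl⟩
              have hSled : S ≤ -d := by
                rw [hSdef]
                calc ∑ i, d * (φ i (p i x) - ψ i (p i x))
                    ≤ ∑ i, (if i = i0 then -d else 0) := by
                      apply Finset.sum_le_sum
                      intro i _
                      rw [hterm i]
                      by_cases hi : i = i0
                      · subst hi
                        rw [hψ1', if_pos rfl, mul_one]
                      · rw [if_neg hi, neg_nonpos]
                        exact mul_nonneg hd.le (hψ01 i _).1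
                  _ = -d := by rw [Finset.sum_ite_eq' Finset.univ i0 fun _ => -d]; simp
              linarith
          · -- f x - S < β
            linarith
      · -- positive case: lam < f x
        have hψz : ∀ i, ψ i (p i x) = 0 := by
          intro i
          by_contra h
          exact absurd (hψpos i h) (not_lt.mpr (by linarith))
        have hterm : ∀ i, d * (φ i (p i x) - ψ i (p i x)) = d * φ i (p i x) := by
          intro i; rw [hψz i]; ring
        have hSge : 0 ≤ S := by
          rw [hSdef]
          apply Finset.sum_nonneg
          intro i _
          rw [hterm i]
          exact mul_nonneg hd.le (hφ01 i _).1
        have hSle : S ≤ M := by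
          rw [hSdef, ← hcard]
          apply Finset.sum_le_sum
          intro i _
          rw [hterm i]
          calc d * φ i (p i x) ≤ d * 1 :=
                mul_le_mul_of_nonneg_left (hφ01 i _).2 hd.le
            _ = d := mul_one d
        constructor
        · -- -β < f x - S
          linarith
        · -- f x - S < β
          rcases lt_or_ge (f x) β with h3 | h3
          · linarith
          · have hxP : x ∈ P := by
              show b ≤ f x
              linarith
            obtain ⟨i0, hi0⟩ := Set.mem_iUnion.mp (hvpP hxP)
            have hφ1' : φ i0 (p i0 x) = 1 := hφ1 i0 ⟨x, hi0, rfl⟩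
            have hSged : d ≤ S := by
              rw [hSdef]
              calc d = ∑ i, (if i = i0 then d else 0) := by
                    rw [Finset.sum_ite_eq' Finset.univ i0 fun _ => d]; simp
                _ ≤ ∑ i, d * (φ i (p i x) - ψ i (p i x)) := by
                    apply Finset.sum_le_sum
                    intro i _
                    rw [hterm i]
                    by_cases hi : i = i0
                    · subst hi
                      rw [hφ1', if_pos rfl, mul_one]
                    · rw [if_neg hi]
                      exact mul_nonneg hd.le (hφ01 i _).1
            linarith
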